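/- Let (X_t)_{t∈[s,T]} be a continuous ℝ^{nd}-valued process with X_t = x + ∫_s^t F(u,X_u) du + ∫_s^t B σ(u,X_u) dW_u, where F is Lipschitz in space with constant κ uniformly in time, B = (I_d,0,…,0)^*, and σ is bounded by Λ^{1/2}. Let θ_{t,s}(x) be the flow of θ̇ = F. Then |X_t − θ_{t,s}(x)| ≤ e^{κ(T−s)} sup_{u∈[s,t]} |∫_s^u B σ(v,X_v) dW_v| for all t ∈ [s,T], and consequently for every δ > 0 and h ∈ (0, T−s], P[ sup_{t∈[s,s+h]} |X_t − θ_{t,s}(x)| ≥ δ ] ≤ 2d exp( − δ² / (2 d Λ h e^{2κ(T−s)}) ). -/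

import Mathlib

open MeasureTheory

/-- Integral form of Gronwall's inequality. -/
lemma gronwall_int {g : ℝ → ℝ} (hg : Continuous g) (hg0 : ∀ u, 0 ≤ g u)
    {s t S K : ℝ} (hst : s ≤ t) (hS : 0 ≤ S) (hK : 0 ≤ K)
    (hle : ∀ u ∈ Set.Icc s t, g u ≤ S + K * ∫ v in s..u, g v) :
    g t ≤ S * Real.exp (K * (t - s)) := by
  set G : ℝ → ℝ := fun u => ∫ v in s..u, g v with hG
  have hG' : ∀ u, HasDerivAt G (g u) u := fun u =>
    (hg.integral_hasStrictDerivAt s u).hasDerivAt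
  have hGc : ContinuousOn G (Set.Icc s t) := fun u _ =>
    (hG' u).continuousAt.continuousWithinAt
  have hGnn : ∀ u ∈ Set.Icc s t, 0 ≤ G u := fun u hu =>
    intervalIntegral.integral_nonneg hu.1 (fun v _ => hg0 v)
  have bound : ∀ u ∈ Set.Ico s t, ‖g u‖ ≤ K * ‖G u‖ + S := by
    intro u hu
    have hu' : u ∈ Set.Icc s t := ⟨hu.1, hu.2.le⟩
    rw [Real.norm_of_nonneg (hg0 u), Real.norm_of_nonneg (hGnn u hu')]
    linarith [hle u hu']
  have hGt : ‖G t‖ ≤ gronwallBound 0 K S (t - s) := by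
    have := norm_le_gronwallBound_of_norm_deriv_right_le hGc
      (fun u _ => (hG' u).hasDerivWithinAt) (show ‖G s‖ ≤ 0 by simp [hG]) bound
    exact this t ⟨hst, le_rfl⟩
  have hGt' : G t ≤ gronwallBound 0 K S (t - s) := by
    rw [← Real.norm_of_nonneg (hGnn t ⟨hst, le_rfl⟩)]; exact hGt
  have hgt := hle t ⟨hst, le_rfl⟩
  rcases eq_or_lt_of_le hK with hK0 | hKpos
  · rw [← hK0] at hgt ⊢
    simpa using hgt.trans (by simp)
  · have hKne : K ≠ 0 := ne_of_gt hKpos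
    rw [gronwallBound_of_K_ne_0 hKne] at hGt'
    have : g t ≤ S + K * (0 * Real.exp (K * (t - s)) + S / K * (Real.exp (K * (t - s)) - 1)) :=
      hgt.trans (by nlinarith)
    calc g t ≤ S + K * (0 * Real.exp (K * (t - s)) + S / K * (Real.exp (K * (t - s)) - 1)) := this
      _ = S * Real.exp (K * (t - s)) := by field_simp; ring



lemma discrete_max_ineq {Ω : Type} [m : MeasurableSpace Ω] (P : Measure Ω)
    [IsProbabilityMeasure P] (G : Filtration ℕ m) (Z : ℕ → Ω → ℝ)
    (hZ : Supermartingale Z G P) (hpos : ∀ i ω, 0 ≤ Z i ω)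
    {c : ℝ} (hc : 0 < c) (k : ℕ) :
    P {ω | ∃ i ≤ k, c ≤ Z i ω} ≤ ENNReal.ofReal ((∫ ω, Z 0 ω ∂P) / c) := by
  classical
  set A := {ω | ∃ i ≤ k, c ≤ Z i ω} with hA
  have hAmeas : MeasurableSet A := by
    have : A = ⋃ i ∈ Finset.range (k+1), {ω | c ≤ Z i ω} := by
      ext ω; simp [hA, Nat.lt_succ_iff]
    rw [this]
    refine MeasurableSet.biUnion (Finset.range (k+1)).countable_toSet fun i _ => ?_
    exact measurableSet_le measurable_const
      ((hZ.stronglyAdapted i).measurable.le (G.le i))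
  set τ : Ω → WithTop ℕ := fun ω => ((hittingBtwn Z (Set.Ici c) 0 k ω : ℕ) : WithTop ℕ) with hτdef
  have hτ : IsStoppingTime G τ := Adapted.isStoppingTime_hittingBtwn hZ.stronglyAdapted.adapted measurableSet_Ici
  have hτle : ∀ ω, τ ω ≤ k := fun ω => WithTop.coe_le_coe.mpr (hittingBtwn_le ω)
  -- stopped value bounds
  have hstop_ge : ∀ ω ∈ A, c ≤ stoppedValue Z τ ω := by
    intro ω hω
    obtain ⟨i, hik, hci⟩ := hω
    exact stoppedValue_hittingBtwn_mem ⟨i, ⟨Nat.zero_le _, hik⟩, hci⟩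
  have hstop_nonneg : ∀ ω, 0 ≤ stoppedValue Z τ ω := fun ω => hpos _ ω
  -- integrability
  have hint : Integrable (stoppedValue Z τ) P := by
    have h : Integrable (fun ω => -(stoppedValue Z τ ω)) P :=
      hZ.neg.integrable_stoppedValue hτ hτle
    exact h.neg.congr (Filter.Eventually.of_forall fun ω => by simp)
  -- optional stopping
  have hEstop : ∫ ω, stoppedValue Z τ ω ∂P ≤ ∫ ω, Z 0 ω ∂P := by
    have h := hZ.neg.expected_stoppedValue_mono (isStoppingTime_const G 0) hτ
      (fun ω => WithTop.coe_le_coe.mpr (Nat.zero_le _)) hτle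
    have h0 : stoppedValue (-Z) (fun _ => WithTop.some (0:ℕ)) = fun ω => -(Z 0 ω) := rfl
    have h1 : stoppedValue (-Z) τ = fun ω => -(stoppedValue Z τ ω) := rfl
    rw [h0, h1, integral_neg, integral_neg, neg_le_neg_iff] at h
    exact h
  -- lower bound on integral
  have hlow : c * (P A).toReal ≤ ∫ ω, stoppedValue Z τ ω ∂P := by
    have h1 : c * (P A).toReal ≤ ∫ ω in A, stoppedValue Z τ ω ∂P :=
      setIntegral_ge_of_const_le_real hAmeas (measure_ne_top P A) hstop_ge hint.integrableOn
    have h2 : ∫ ω in A, stoppedValue Z τ ω ∂P ≤ ∫ ω, stoppedValue Z τ ω ∂P :=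
      setIntegral_le_integral hint (Filter.Eventually.of_forall hstop_nonneg)
    linarith
  have : (P A).toReal ≤ (∫ ω, Z 0 ω ∂P) / c := by
    rw [le_div_iff₀ hc]; nlinarith
  calc P A = ENNReal.ofReal ((P A).toReal) := (ENNReal.ofReal_toReal (measure_ne_top P A)).symm
    _ ≤ _ := ENNReal.ofReal_le_ofReal this


set_option maxHeartbeats 1000000 in
lemma cont_max_ineq {Ω : Type} [m : MeasurableSpace Ω] (P : Measure Ω)
    [IsProbabilityMeasure P] (ℱ : Filtration ℝ m) (Y : ℝ → Ω → ℝ)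
    (hY : Supermartingale Y ℱ P) (hpos : ∀ t ω, 0 ≤ Y t ω)
    {s h : ℝ} (hh : 0 < h)
    (hYc : ∀ ω, ContinuousOn (fun t => Y t ω) (Set.Icc s (s + h)))
    (hY1 : ∀ ω, Y s ω = 1) {c : ℝ} (hc : 0 < c) :
    P {ω | ∃ t ∈ Set.Icc s (s + h), c ≤ Y t ω} ≤ ENNReal.ofReal (1 / c) := by
  classical
  set E := {ω | ∃ t ∈ Set.Icc s (s + h), c ≤ Y t ω} with hE
  -- time grids
  set u : ℕ → ℕ → ℝ := fun mm i => s + h * ((min i (2 ^ mm) : ℕ) : ℝ) / (2 ^ mm : ℕ) with hu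
  have hu0 : ∀ mm, u mm 0 = s := by intro mm; simp [hu]
  have humono : ∀ mm, Monotone (u mm) := by
    intro mm i j hij
    have : ((min i (2 ^ mm) : ℕ) : ℝ) ≤ ((min j (2 ^ mm) : ℕ) : ℝ) := by
      exact_mod_cast Nat.cast_le.mpr (min_le_min hij le_rfl)
    have h2 : (0:ℝ) < ((2:ℕ) ^ mm : ℕ) := by positivity
    simp only [hu]
    have := mul_le_mul_of_nonneg_left this hh.le
    gcongr
  -- key step: the grid bound
  have key : ∀ c' : ℝ, 0 < c' → c' < c → P E ≤ ENNReal.ofReal (1 / c') := by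
    intro c' hc' hc'c
    set A : ℕ → Set Ω := fun mm => {ω | ∃ i ≤ 2 ^ mm, c' ≤ Y (u mm i) ω} with hA
    have hbound : ∀ mm, P (A mm) ≤ ENNReal.ofReal (1 / c') := by
      intro mm
      set G : Filtration ℕ m :=
        ⟨fun i => ℱ (u mm i), fun i j hij => ℱ.mono (humono mm hij), fun i => ℱ.le _⟩ with hG
      have hZ : Supermartingale (fun i => Y (u mm i)) G P := by
        refine ⟨fun i => hY.stronglyAdapted (u mm i), fun i j hij => ?_, fun i => hY.integrable _⟩
        exact hY.2.1 (u mm i) (u mm j) (humono mm hij)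
      have := discrete_max_ineq P G (fun i => Y (u mm i)) hZ
        (fun i ω => hpos _ ω) hc' (2 ^ mm)
      have hint : (∫ ω, Y (u mm 0) ω ∂P) = 1 := by
        rw [hu0]; simp [hY1]
      rw [hint] at this
      exact this
    have hsub : E ⊆ ⋃ mm, A mm := by
      intro ω hω
      obtain ⟨t, ht, hct⟩ := hω
      have hcont : ContinuousWithinAt (fun t => Y t ω) (Set.Icc s (s + h)) t := hYc ω t ht
      have hev : ∀ᶠ v in nhdsWithin t (Set.Icc s (s + h)), c' < Y v ω :=
        hcont (Ioi_mem_nhds (lt_of_lt_of_le hc'c hct))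
      rw [eventually_nhdsWithin_iff, Metric.eventually_nhds_iff] at hev
      obtain ⟨ε, hε, hball⟩ := hev
      obtain ⟨mm, hmm⟩ := pow_unbounded_of_one_lt (h / ε) (one_lt_two : (1:ℝ) < 2)
      set N : ℝ := (2:ℝ) ^ mm with hN
      have hN0 : (0:ℝ) < N := by positivity
      have hhN : h / N < ε := by
        rw [div_lt_iff₀ hN0]
        rw [div_lt_iff₀ hε] at hmm
        linarith [hmm]
      have hts : s ≤ t := ht.1
      have hts' : t ≤ s + h := ht.2
      set r : ℝ := (t - s) / h with hr
      have hr0 : 0 ≤ r := div_nonneg (by linarith) hh.le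
      have hr1 : r ≤ 1 := by rw [hr, div_le_one hh]; linarith
      set i₀ : ℕ := ⌊r * N⌋₊ with hi₀
      have hfl1 : (i₀ : ℝ) ≤ r * N := Nat.floor_le (by positivity)
      have hfl2 : r * N < i₀ + 1 := Nat.lt_floor_add_one _
      have hi₀le : i₀ ≤ 2 ^ mm := by
        have : r * N ≤ N := by nlinarith
        have h2 : (i₀ : ℝ) ≤ N := le_trans hfl1 this
        have : (N : ℝ) = ((2 ^ mm : ℕ) : ℝ) := by push_cast [hN]; ring
        rw [this] at h2
        exact_mod_cast h2
      have hcast : ((2 ^ mm : ℕ) : ℝ) = N := by rw [hN]; push_cast; ring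
      have huq : u mm i₀ = s + h * i₀ / N := by
        simp only [hu, min_eq_left hi₀le, hcast]
      have hqmem : s + h * i₀ / N ∈ Set.Icc s (s + h) := by
        have h2 : (i₀ : ℝ) ≤ N := by nlinarith
        have hlow : 0 ≤ h * i₀ / N := by positivity
        have hup : h * i₀ / N ≤ h := by rw [div_le_iff₀ hN0]; nlinarith
        exact ⟨by linarith, by linarith⟩
      have hqt : dist (s + h * i₀ / N) t < ε := by
        rw [Real.dist_eq, abs_lt]
        have e1 : h * (i₀ : ℝ) / N ≤ t - s := by
          rw [div_le_iff₀ hN0]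
          have : r * h = t - s := by rw [hr]; field_simp
          nlinarith
        have e2 : t - s < h * i₀ / N + h / N := by
          have h4 : (t - s) * N < ((i₀ : ℝ) + 1) * h := by
            have : r * N < (i₀ : ℝ) + 1 := hfl2
            have hrh : r * h = t - s := by rw [hr]; field_simp
            nlinarith
          rw [← add_div, lt_div_iff₀ hN0]
          nlinarith
        constructor
        · linarith
        · linarith
      refine Set.mem_iUnion.mpr ⟨mm, ⟨i₀, hi₀le, ?_⟩⟩
      rw [huq]
      exact (hball hqt hqmem).le
    calc P E ≤ P (⋃ mm, A mm) := measure_mono hsub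
      _ = ⨆ mm, P (A mm) := by
          apply Monotone.measure_iUnion
          apply monotone_nat_of_le_succ
          intro mm ω hω
          obtain ⟨i, hik, hYi⟩ := hω
          refine ⟨2 * i, by omega, ?_⟩
          have hmin : min (2 * i) (2 ^ (mm + 1)) = 2 * min i (2 ^ mm) := by
            rw [pow_succ]; omega
          have hueq : u (mm + 1) (2 * i) = u mm i := by
            simp only [hu, hmin]
            have h2 : ((2:ℕ) ^ mm : ℝ) ≠ 0 := by positivity
            push_cast [pow_succ]
            field_simp
          rw [hueq]
          exact hYi
      _ ≤ ENNReal.ofReal (1 / c') := iSup_le hbound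
  -- limiting argument
  set f : ℕ → ℝ := fun k => (1 + 1 / (k + 1 : ℝ)) / c with hf
  have hflim : Filter.Tendsto f Filter.atTop (nhds (1 / c)) := by
    have h1 : Filter.Tendsto (fun k : ℕ => 1 + 1 / (k + 1 : ℝ)) Filter.atTop (nhds 1) := by
      have := tendsto_one_div_add_atTop_nhds_zero_nat (𝕜 := ℝ)
      have h2 := Filter.Tendsto.const_add (1:ℝ) this
      simpa using h2
    have := h1.div_const c
    simpa [hf] using this
  have hofR : Filter.Tendsto (fun k => ENNReal.ofReal (f k)) Filter.atTop
      (nhds (ENNReal.ofReal (1 / c))) := ENNReal.continuous_ofReal.continuousAt.tendsto.comp hflim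
  refine ge_of_tendsto' hofR fun k => ?_
  have hd : (0:ℝ) < 1 + 1 / (k + 1 : ℝ) := by positivity
  have hck : 0 < c / (1 + 1 / (k + 1 : ℝ)) := by positivity
  have hckc : c / (1 + 1 / (k + 1 : ℝ)) < c := by
    rw [div_lt_iff₀ hd]
    have h0 : 0 < c * (1 / (k + 1 : ℝ)) := mul_pos hc (by positivity)
    have hexpand : c * (1 + 1 / (k + 1 : ℝ)) = c + c * (1 / (k + 1 : ℝ)) := by ring
    linarith
  have hthis := key _ hck hckc
  have heq : (1 : ℝ) / (c / (1 + 1 / (k + 1 : ℝ))) = f k := by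
    rw [hf]; rw [one_div_div]
  rw [heq] at hthis
  exact hthis


section Part1

variable {n d : ℕ} {E : Type} 

/-- Part 1 : pathwise Gronwall bound, abstract version. -/
lemma part1 {κ s T : ℝ} (hκ : 0 ≤ κ) (hsT : s ≤ T)
    {F : ℝ → EuclideanSpace ℝ (Fin n × Fin d) → EuclideanSpace ℝ (Fin n × Fin d)}
    (hLip : ∀ r a b, ‖F r a - F r b‖ ≤ κ * ‖a - b‖)
    {x : EuclideanSpace ℝ (Fin n × Fin d)}
    {θ : ℝ → EuclideanSpace ℝ (Fin n × Fin d)}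
    (hθ0 : θ s = x)
    (hθode : ∀ u ∈ Set.Icc s T, HasDerivAt θ (F u (θ u)) u)
    {Y N : ℝ → EuclideanSpace ℝ (Fin n × Fin d)}
    (hXc : ContinuousOn Y (Set.Icc s T))
    (hMc : ContinuousOn N (Set.Icc s T))
    (hM0 : N s = 0)
    (hintY : ∀ t ∈ Set.Icc s T, IntervalIntegrable (fun u => F u (Y u)) volume s t)
    (hdecomp : ∀ t ∈ Set.Icc s T, Y t = x + (∫ u in s..t, F u (Y u)) + N t) :
    ∀ t ∈ Set.Icc s T,
      ‖Y t - θ t‖ ≤ Real.exp (κ * (T - s)) * ⨆ u : Set.Icc s t, ‖N (u : ℝ)‖ := by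
  -- continuity of θ on [s,T]
  have hθc : ContinuousOn θ (Set.Icc s T) := fun u hu =>
    (hθode u hu).continuousAt.continuousWithinAt
  -- integrability of v ↦ F v (θ v) on subintervals
  have hFθint : ∀ t ∈ Set.Icc s T, IntervalIntegrable (fun v => F v (θ v)) volume s t := by
    intro t ht
    rw [intervalIntegrable_iff_integrableOn_Ioc_of_le ht.1]
    have hIoc : Set.Ioc s t ⊆ Set.Icc s T := fun v hv => ⟨hv.1.le, hv.2.trans ht.2⟩
    -- bound function
    have hYint : IntegrableOn (fun v => F v (Y v)) (Set.Ioc s t) volume := by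
      have := hintY t ht
      rwa [intervalIntegrable_iff_integrableOn_Ioc_of_le ht.1] at this
    have hcontbd : IntegrableOn (fun v => κ * ‖θ v - Y v‖) (Set.Ioc s t) volume := by
      apply IntegrableOn.mono_set _ hIoc
      apply ContinuousOn.integrableOn_compact isCompact_Icc
      exact continuousOn_const.mul ((hθc.sub hXc).norm)
    have hbd : IntegrableOn (fun v => ‖F v (Y v)‖ + κ * ‖θ v - Y v‖) (Set.Ioc s t) volume :=
      hYint.norm.add hcontbd
    -- measurability via deriv
    have hmeas : AEStronglyMeasurable (fun v => F v (θ v)) (volume.restrict (Set.Ioc s t)) := by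
      have hsm := stronglyMeasurable_deriv θ
      refine (hsm.aestronglyMeasurable).congr ?_
      rw [Filter.EventuallyEq, ae_restrict_iff' measurableSet_Ioc]
      filter_upwards with v hv
      exact ((hθode v (hIoc hv)).deriv).symm ▸ rfl
    apply Integrable.mono' hbd hmeas
    rw [ae_restrict_iff' measurableSet_Ioc]
    filter_upwards with v hv
    calc ‖F v (θ v)‖ ≤ ‖F v (Y v)‖ + ‖F v (θ v) - F v (Y v)‖ := by
          have := norm_add_le (F v (Y v)) (F v (θ v) - F v (Y v))
          simpa using this
      _ ≤ ‖F v (Y v)‖ + κ * ‖θ v - Y v‖ := by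
          have := hLip v (θ v) (Y v)
          linarith
  -- main argument
  intro t ht
  have hst : s ≤ t := ht.1
  have hsubT : Set.Icc s t ⊆ Set.Icc s T := Set.Icc_subset_Icc le_rfl ht.2
  -- the sup S
  have hbdd : BddAbove (Set.range fun u : Set.Icc s t => ‖N (u : ℝ)‖) := by
    have heq : (Set.range fun u : Set.Icc s t => ‖N (u : ℝ)‖)
        = (fun w => ‖N w‖) '' Set.Icc s t := (Set.image_eq_range (fun w => ‖N w‖) (Set.Icc s t)).symm
    rw [heq]
    exact (isCompact_Icc.image_of_continuousOn ((hMc.mono hsubT).norm)).bddAbove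
  set S : ℝ := ⨆ u : Set.Icc s t, ‖N (u : ℝ)‖ with hSdef
  have hMS : ∀ u ∈ Set.Icc s t, ‖N u‖ ≤ S := fun u hu => le_ciSup hbdd ⟨u, hu⟩
  have hS0 : 0 ≤ S := by
    have := hMS s ⟨le_rfl, hst⟩
    rw [hM0] at this; simpa using this
  -- clamp
  set π : ℝ → ℝ := fun v => max s (min v t) with hπ
  have hπcont : Continuous π := continuous_const.max (continuous_id.min continuous_const)
  have hπmem : ∀ v, π v ∈ Set.Icc s t := fun v =>
    ⟨le_max_left _ _, max_le (hst) (min_le_right _ _)⟩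
  have hπid : ∀ v ∈ Set.Icc s t, π v = v := fun v hv => by
    rw [hπ]; simp only [min_eq_left hv.2, max_eq_right hv.1]
  set g : ℝ → ℝ := fun v => ‖Y (π v) - θ (π v)‖ with hg
  have hgc : Continuous g := by
    apply ContinuousOn.comp_continuous ((hXc.sub hθc).norm) hπcont
    exact fun v => hsubT (hπmem v)
  have hg0 : ∀ v, 0 ≤ g v := fun v => norm_nonneg _
  have hgeq : ∀ v ∈ Set.Icc s t, g v = ‖Y v - θ v‖ := fun v hv => by
    rw [hg]; simp only [hπid v hv]
  have hgle : ∀ u ∈ Set.Icc s t, g u ≤ S + κ * ∫ v in s..u, g v := by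
    intro u hu
    have huT : u ∈ Set.Icc s T := hsubT hu
    have hsubu : Set.uIcc s u ⊆ Set.Icc s T := by
      rw [Set.uIcc_of_le hu.1]
      exact (Set.Icc_subset_Icc le_rfl huT.2)
    -- FTC for θ
    have hθint : (∫ v in s..u, F v (θ v)) = θ u - x := by
      rw [← hθ0]
      exact intervalIntegral.integral_eq_sub_of_hasDerivAt
        (fun v hv => hθode v (hsubu hv)) (hFθint u huT)
    have hXu := hdecomp u huT
    have hdiff : Y u - θ u = (∫ v in s..u, (F v (Y v) - F v (θ v))) + N u := by
      rw [intervalIntegral.integral_sub (hintY u huT) (hFθint u huT), hθint, hXu]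
      abel
    rw [hgeq u hu, hdiff]
    have h1 : ‖(∫ v in s..u, (F v (Y v) - F v (θ v))) + N u‖ ≤
        ‖∫ v in s..u, (F v (Y v) - F v (θ v))‖ + ‖N u‖ := norm_add_le _ _
    have h2 : ‖∫ v in s..u, (F v (Y v) - F v (θ v))‖ ≤ ∫ v in s..u, κ * g v := by
      have hb : ∀ᵐ v ∂(volume.restrict (Set.uIoc s u)), ‖F v (Y v) - F v (θ v)‖ ≤ κ * g v := by
        rw [Set.uIoc_of_le hu.1, ae_restrict_iff' measurableSet_Ioc]
        filter_upwards with v hv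
        have hvt : v ∈ Set.Icc s t := ⟨hv.1.le, hv.2.trans hu.2⟩
        rw [hgeq v hvt]
        exact hLip v (Y v) (θ v)
      have habs := intervalIntegral.norm_integral_le_abs_of_norm_le hb
        ((continuous_const.mul hgc).intervalIntegrable s u)
      have hnn : (0:ℝ) ≤ ∫ v in s..u, κ * g v :=
        intervalIntegral.integral_nonneg hu.1 (fun v _ => mul_nonneg hκ (hg0 v))
      rwa [abs_of_nonneg hnn] at habs
    rw [intervalIntegral.integral_const_mul] at h2
    have := hMS u hu
    calc ‖(∫ v in s..u, (F v (Y v) - F v (θ v))) + N u‖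
        ≤ (κ * ∫ v in s..u, g v) + ‖N u‖ := by linarith
      _ ≤ S + κ * ∫ v in s..u, g v := by linarith
  have hfin := gronwall_int hgc hg0 hst hS0 hκ hgle
  rw [hgeq t ⟨hst, le_rfl⟩] at hfin
  calc ‖Y t - θ t‖ ≤ S * Real.exp (κ * (t - s)) := hfin
    _ ≤ Real.exp (κ * (T - s)) * S := by
        rw [mul_comm]
        apply mul_le_mul_of_nonneg_right _ hS0
        exact Real.exp_le_exp.mpr (by nlinarith [ht.2])

end Part1

set_option maxHeartbeats 1000000 in
/-- Deviation of the SDE from its characteristic: pathwise Gronwall bound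
|X_t − θ_{t,s}(x)| ≤ e^{κ(T−s)} sup_{u∈[s,t]}|M_u| (M the martingale part, supported in the
first block), and the Bernstein tail estimate
P[sup_{[s,s+h]}|X − θ| ≥ δ] ≤ 2d exp(−δ²/(2dΛh e^{2κ(T−s)})), under the exponential
supermartingale property of the components of M (encoding that M = ∫ Bσ dW with |σ|² ≤ Λ). -/
theorem stmt_16 (n d : ℕ) (hn : 1 ≤ n) (hd : 1 ≤ d) (s T κ Λ : ℝ)
    (hsT : s < T) (hκ : 0 ≤ κ) (hΛ : 0 < Λ)
    {Ω : Type} [m : MeasurableSpace Ω] (P : Measure Ω) [IsProbabilityMeasure P]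
    (ℱ : Filtration ℝ m)
    (F : ℝ → EuclideanSpace ℝ (Fin n × Fin d) → EuclideanSpace ℝ (Fin n × Fin d))
    (hLip : ∀ r a b, ‖F r a - F r b‖ ≤ κ * ‖a - b‖)
    (x : EuclideanSpace ℝ (Fin n × Fin d))
    (θ : ℝ → EuclideanSpace ℝ (Fin n × Fin d))
    (hθ0 : θ s = x)
    (hθode : ∀ u ∈ Set.Icc s T, HasDerivAt θ (F u (θ u)) u)
    (X M : ℝ → Ω → EuclideanSpace ℝ (Fin n × Fin d))
    (hXc : ∀ ω, ContinuousOn (fun u => X u ω) (Set.Icc s T))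
    (hMc : ∀ ω, ContinuousOn (fun u => M u ω) (Set.Icc s T))
    (hM0 : ∀ ω, M s ω = 0)
    (hMblock : ∀ t ω (p : Fin n × Fin d), (p.1 : ℕ) ≠ 0 → M t ω p = 0)
    (hint : ∀ ω, ∀ t ∈ Set.Icc s T, IntervalIntegrable (fun u => F u (X u ω)) volume s t)
    (hdecomp : ∀ ω, ∀ t ∈ Set.Icc s T, X t ω = x + (∫ u in s..t, F u (X u ω)) + M t ω)
    (hexp : ∀ (j : Fin d) (l : ℝ),
      Supermartingale
        (fun (t : ℝ) (ω : Ω) =>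
          Real.exp (l * M t ω (⟨0, hn⟩, j) - l ^ 2 * Λ * (t - s) / 2)) ℱ P) :
    (∀ ω, ∀ t ∈ Set.Icc s T,
      ‖X t ω - θ t‖ ≤ Real.exp (κ * (T - s)) * ⨆ u : Set.Icc s t, ‖M (u : ℝ) ω‖) ∧
    (∀ δ h : ℝ, 0 < δ → 0 < h → h ≤ T - s →
      P {ω | ∃ t ∈ Set.Icc s (s + h), δ ≤ ‖X t ω - θ t‖} ≤
        ENNReal.ofReal
          (2 * d * Real.exp (-(δ ^ 2) / (2 * d * Λ * h * Real.exp (2 * κ * (T - s)))))) := by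
  have hP1 : ∀ ω, ∀ t ∈ Set.Icc s T,
      ‖X t ω - θ t‖ ≤ Real.exp (κ * (T - s)) * ⨆ u : Set.Icc s t, ‖M (u : ℝ) ω‖ := by
    intro ω
    have hres := part1 hκ hsT.le hLip hθ0 hθode (hXc ω) (hMc ω) (hM0 ω) (hint ω) (hdecomp ω)
    exact hres
  refine ⟨hP1, ?_⟩
  intro δ h hδ hh hhT
  classical
  set p0 : Fin n := ⟨0, hn⟩ with hp0
  have hd0 : (0:ℝ) < Real.sqrt d := Real.sqrt_pos.mpr (by exact_mod_cast Nat.pos_of_ne_zero (by omega))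
  have hexpTs : (0:ℝ) < Real.exp (κ * (T - s)) := Real.exp_pos _
  set a : ℝ := δ / (Real.sqrt d * Real.exp (κ * (T - s))) with ha
  have ha0 : 0 < a := div_pos hδ (mul_pos hd0 hexpTs)
  set l : ℝ := a / (Λ * h) with hl
  have hl0 : 0 < l := div_pos ha0 (mul_pos hΛ hh)
  set c : ℝ := Real.exp (a ^ 2 / (2 * Λ * h)) with hc
  have hc0 : 0 < c := Real.exp_pos _
  have hsh : s + h ≤ T := by linarith
  have hss : s ≤ s + h := by linarith
  have hIccsub : Set.Icc s (s + h) ⊆ Set.Icc s T := Set.Icc_subset_Icc le_rfl hsh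
  -- the exponent identity
  have hca : l * a - l ^ 2 * Λ * h / 2 = a ^ 2 / (2 * Λ * h) := by
    rw [hl]
    have hΛh : Λ * h ≠ 0 := ne_of_gt (mul_pos hΛ hh)
    field_simp
    ring
  -- the events
  set Bp : Fin d → Set Ω := fun j => {ω | ∃ t ∈ Set.Icc s (s + h), a ≤ M t ω (p0, j)} with hBp
  set Bm : Fin d → Set Ω := fun j => {ω | ∃ t ∈ Set.Icc s (s + h), a ≤ -(M t ω (p0, j))} with hBm
  -- covering
  have hcover : {ω | ∃ t ∈ Set.Icc s (s + h), δ ≤ ‖X t ω - θ t‖} ⊆ ⋃ j, (Bp j ∪ Bm j) := by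
    intro ω hω
    obtain ⟨t, ht, hδt⟩ := hω
    have htT : t ∈ Set.Icc s T := hIccsub ht
    have hboundP1 := hP1 ω t htT
    -- max of ‖M‖ on [s, t]
    have hsubt : Set.Icc s t ⊆ Set.Icc s T := Set.Icc_subset_Icc le_rfl htT.2
    obtain ⟨u₀, hu₀mem, hu₀max⟩ := isCompact_Icc.exists_isMaxOn (Set.nonempty_Icc.mpr ht.1)
      (((hMc ω).mono hsubt).norm)
    have hsuple : (⨆ u : Set.Icc s t, ‖M (u : ℝ) ω‖) ≤ ‖M u₀ ω‖ := by
      haveI : Nonempty (Set.Icc s t) := (Set.nonempty_Icc.mpr ht.1).to_subtype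
      apply ciSup_le
      intro u
      exact hu₀max u.2
    have hMnorm : a * Real.sqrt d ≤ ‖M u₀ ω‖ := by
      have h1 : δ ≤ Real.exp (κ * (T - s)) * ‖M u₀ ω‖ := by
        calc δ ≤ ‖X t ω - θ t‖ := hδt
          _ ≤ Real.exp (κ * (T - s)) * ⨆ u : Set.Icc s t, ‖M (u : ℝ) ω‖ := hboundP1
          _ ≤ Real.exp (κ * (T - s)) * ‖M u₀ ω‖ := by
              apply mul_le_mul_of_nonneg_left hsuple hexpTs.le
      rw [ha]
      rw [div_mul_eq_mul_div, div_le_iff₀ (mul_pos hd0 hexpTs)]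
      calc δ * Real.sqrt d ≤ (Real.exp (κ * (T - s)) * ‖M u₀ ω‖) * Real.sqrt d := by
            apply mul_le_mul_of_nonneg_right h1 hd0.le
        _ = ‖M u₀ ω‖ * (Real.sqrt d * Real.exp (κ * (T - s))) := by ring
    -- find a coordinate
    have hcoord : ∃ j : Fin d, a ≤ |M u₀ ω (p0, j)| := by
      by_contra hno
      push_neg at hno
      have hnormsq : ‖M u₀ ω‖ ^ 2 = ∑ j : Fin d, (M u₀ ω (p0, j)) ^ 2 := by
        rw [EuclideanSpace.norm_eq, Real.sq_sqrt (Finset.sum_nonneg fun p _ => sq_nonneg _)]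
        rw [Fintype.sum_prod_type]
        rw [Finset.sum_eq_single p0]
        · simp [Real.norm_eq_abs, sq_abs]
        · intro i _ hi
          apply Finset.sum_eq_zero
          intro j _
          have : (i : ℕ) ≠ 0 := by
            intro h0
            apply hi
            apply Fin.ext
            simpa [hp0] using h0
          rw [hMblock u₀ ω (i, j) this]
          simp
        · intro hmem
          exact absurd (Finset.mem_univ p0) hmem
      have hlt : ∑ j : Fin d, (M u₀ ω (p0, j)) ^ 2 < d * a ^ 2 := by
        have : ∀ j : Fin d, (M u₀ ω (p0, j)) ^ 2 < a ^ 2 := by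
          intro j
          have h1 := hno j
          nlinarith [abs_nonneg (M u₀ ω (p0, j)), sq_abs (M u₀ ω (p0, j))]
        calc ∑ j : Fin d, (M u₀ ω (p0, j)) ^ 2 < ∑ _j : Fin d, a ^ 2 :=
              Finset.sum_lt_sum_of_nonempty (by simp [Finset.univ_nonempty_iff]; exact Fin.pos_iff_nonempty.mp (by omega)) (fun j _ => this j)
          _ = d * a ^ 2 := by simp [mul_comm]
      have hge : d * a ^ 2 ≤ ‖M u₀ ω‖ ^ 2 := by
        have h2 : (a * Real.sqrt d) ^ 2 ≤ ‖M u₀ ω‖ ^ 2 := by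
          apply pow_le_pow_left₀ (by positivity) hMnorm
        calc (d:ℝ) * a ^ 2 = (a * Real.sqrt d) ^ 2 := by
              rw [mul_pow, Real.sq_sqrt (by positivity : (0:ℝ) ≤ (d:ℝ))]; ring
          _ ≤ ‖M u₀ ω‖ ^ 2 := h2
      rw [hnormsq] at hge
      linarith
    obtain ⟨j, hj⟩ := hcoord
    have hu₀sh : u₀ ∈ Set.Icc s (s + h) := ⟨hu₀mem.1, hu₀mem.2.trans ht.2⟩
    rcases le_abs.mp hj with hjp | hjm
    · exact Set.mem_iUnion.mpr ⟨j, Or.inl ⟨u₀, hu₀sh, hjp⟩⟩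
    · exact Set.mem_iUnion.mpr ⟨j, Or.inr ⟨u₀, hu₀sh, hjm⟩⟩
  -- bound for each event
  have hMcoordc : ∀ ω (j : Fin d), ContinuousOn (fun t => M t ω (p0, j)) (Set.Icc s (s + h)) := by
    intro ω j
    exact (EuclideanSpace.proj ((p0, j) : Fin n × Fin d)).continuous.comp_continuousOn
      ((hMc ω).mono hIccsub)
  have hPBp : ∀ j : Fin d, P (Bp j) ≤ ENNReal.ofReal (1 / c) := by
    intro j
    have hY := hexp j l
    have hsubev : Bp j ⊆ {ω | ∃ t ∈ Set.Icc s (s + h),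
        c ≤ Real.exp (l * M t ω (p0, j) - l ^ 2 * Λ * (t - s) / 2)} := by
      intro ω hω
      obtain ⟨t, ht, hat⟩ := hω
      refine ⟨t, ht, ?_⟩
      rw [hc, ← hca]
      apply Real.exp_le_exp.mpr
      have h1 : l * a ≤ l * M t ω (p0, j) := mul_le_mul_of_nonneg_left hat hl0.le
      have h2 : l ^ 2 * Λ * (t - s) / 2 ≤ l ^ 2 * Λ * h / 2 := by
        have : t - s ≤ h := by linarith [ht.2]
        have hnn : 0 ≤ l ^ 2 * Λ := by positivity
        nlinarith
      linarith
    calc P (Bp j) ≤ P _ := measure_mono hsubev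
      _ ≤ ENNReal.ofReal (1 / c) := by
          apply cont_max_ineq P ℱ _ hY (fun t ω => Real.exp_nonneg _) hh _ _ hc0
          · intro ω
            apply Real.continuous_exp.comp_continuousOn
            apply ContinuousOn.sub
            · exact continuousOn_const.mul (hMcoordc ω j)
            · exact (Continuous.continuousOn (by continuity))
          · intro ω
            simp [hM0 ω, hp0]
  have hPBm : ∀ j : Fin d, P (Bm j) ≤ ENNReal.ofReal (1 / c) := by
    intro j
    have hY := hexp j (-l)
    have hsubev : Bm j ⊆ {ω | ∃ t ∈ Set.Icc s (s + h),
        c ≤ Real.exp ((-l) * M t ω (p0, j) - (-l) ^ 2 * Λ * (t - s) / 2)} := by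
      intro ω hω
      obtain ⟨t, ht, hat⟩ := hω
      refine ⟨t, ht, ?_⟩
      rw [hc, ← hca]
      apply Real.exp_le_exp.mpr
      have h1 : l * a ≤ (-l) * M t ω (p0, j) := by
        have := mul_le_mul_of_nonneg_left hat hl0.le
        nlinarith
      have h2 : (-l) ^ 2 * Λ * (t - s) / 2 ≤ l ^ 2 * Λ * h / 2 := by
        have : t - s ≤ h := by linarith [ht.2]
        have hnn : 0 ≤ l ^ 2 * Λ := by positivity
        nlinarith
      linarith
    calc P (Bm j) ≤ P _ := measure_mono hsubev
      _ ≤ ENNReal.ofReal (1 / c) := by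
          apply cont_max_ineq P ℱ _ hY (fun t ω => Real.exp_nonneg _) hh _ _ hc0
          · intro ω
            apply Real.continuous_exp.comp_continuousOn
            apply ContinuousOn.sub
            · exact continuousOn_const.mul (hMcoordc ω j)
            · exact (Continuous.continuousOn (by continuity))
          · intro ω
            simp [hM0 ω, hp0]
  -- sum up
  have hsum : P {ω | ∃ t ∈ Set.Icc s (s + h), δ ≤ ‖X t ω - θ t‖} ≤
      (d : ENNReal) * (2 * ENNReal.ofReal (1 / c)) := by
    calc P {ω | ∃ t ∈ Set.Icc s (s + h), δ ≤ ‖X t ω - θ t‖}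
        ≤ P (⋃ j, (Bp j ∪ Bm j)) := measure_mono hcover
      _ ≤ ∑' j : Fin d, P (Bp j ∪ Bm j) := measure_iUnion_le _
      _ = ∑ j : Fin d, P (Bp j ∪ Bm j) := tsum_fintype _
      _ ≤ ∑ _j : Fin d, (2 * ENNReal.ofReal (1 / c)) := by
          apply Finset.sum_le_sum
          intro j _
          calc P (Bp j ∪ Bm j) ≤ P (Bp j) + P (Bm j) := measure_union_le _ _
            _ ≤ ENNReal.ofReal (1 / c) + ENNReal.ofReal (1 / c) := add_le_add (hPBp j) (hPBm j)
            _ = 2 * ENNReal.ofReal (1 / c) := (two_mul _).symm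
      _ = (d : ENNReal) * (2 * ENNReal.ofReal (1 / c)) := by
          rw [Finset.sum_const, Finset.card_univ, Fintype.card_fin, nsmul_eq_mul]
  -- identify the constant
  have hfinal : (d : ENNReal) * (2 * ENNReal.ofReal (1 / c)) =
      ENNReal.ofReal (2 * d * Real.exp (-(δ ^ 2) / (2 * d * Λ * h * Real.exp (2 * κ * (T - s))))) := by
    have hinv : 1 / c = Real.exp (-(δ ^ 2) / (2 * d * Λ * h * Real.exp (2 * κ * (T - s)))) := by
      rw [hc, one_div, ← Real.exp_neg]
      congr 1
      have hexp2 : Real.exp (κ * (T - s)) ^ 2 = Real.exp (2 * κ * (T - s)) := by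
        rw [pow_two, ← Real.exp_add]
        congr 1
        ring
      have hasq : a ^ 2 = δ ^ 2 / (d * Real.exp (2 * κ * (T - s))) := by
        rw [ha, div_pow, mul_pow, Real.sq_sqrt (by positivity : (0:ℝ) ≤ (d:ℝ)), hexp2]
      rw [hasq]
      have h1 : (d:ℝ) * Real.exp (2 * κ * (T - s)) ≠ 0 := by positivity
      have h2 : (2:ℝ) * Λ * h ≠ 0 := by positivity
      field_simp
    rw [hinv]
    rw [← ENNReal.ofReal_ofNat 2, ← ENNReal.ofReal_natCast d, ← ENNReal.ofReal_mul (by positivity),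
      ← ENNReal.ofReal_mul (by positivity)]
    congr 1
    ring
  rw [hfinal] at hsum
  exact hsum
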